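/- In the poset Ĥ of finite and 1-sided infinite strings over the Kronecker algebra that begin with α (ordered by the standard string order: c < d if d = cαd', or c = dβ^{-1}c', or c = eγ^{-1}c' and d = eδd'), the chain H of finite such strings has order type ω + ω*: the strings (αβ^{-1})^n, n ≥ 0 form the ascending ω-part, the strings (αβ^{-1})^mα form the descending ω*-part above them, and the infinite string (αβ^{-1})^∞ sits between the two parts; hence H has m-dimension 1 and the string (αβ^{-1})^∞ has m-dimension 1. -/

import Mathlib

/-! m-dimension machinery for preordered sets. -/

section MDim

variable {P : Type*} [Preorder P]

/-- `[x, y]` has finite length modulo `r`: there is a uniform bound on the lengths of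
strictly increasing chains inside `[x, y]` no two consecutive members of which are
identified by `r`. -/
def FinLenBetween (r : P → P → Prop) (x y : P) : Prop :=
  ∃ n : ℕ, ∀ (m : ℕ) (f : Fin (m + 1) → P), StrictMono f →
    (∀ i, x ≤ f i ∧ f i ≤ y) →
    (∀ i : Fin m, ¬ r (f i.castSucc) (f i.succ)) → m ≤ n

/-- The transfinite sequence of congruences defining m-dimension. -/
noncomputable def mdimCong (P : Type*) [Preorder P] (o : Ordinal) : P → P → Prop :=
  Ordinal.limitRecOn (motive := fun _ => P → P → Prop) o
    (fun x y => x = y)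
    (fun _ ih => Relation.EqvGen
      (fun x y => ih x y ∨ (x ≤ y ∧ FinLenBetween ih x y) ∨ (y ≤ x ∧ FinLenBetween ih y x)))
    (fun o _ ih x y => ∃ (o' : Ordinal) (h : o' < o), ih o' h x y)

/-- `MDimIs P d` : the m-dimension of the ordered set `P` is `d`. -/
def MDimIs (P : Type*) [Preorder P] (d : Ordinal) : Prop :=
  (∀ x y : P, mdimCong P (d + 1) x y) ∧ (d = 0 ∨ ¬ ∀ x y : P, mdimCong P d x y)

end MDim

/-! Strings over the Kronecker algebra.  The two arrows are indexed by `Fin 2`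
(`0` is `α`, `1` is `β`); a letter is a direct arrow `Sum.inl i` or an inverse arrow
`Sum.inr i`.  Both arrows run between the same two vertices, so a word is a string
exactly when direct and inverse letters alternate with distinct arrow indices at each
step. -/

/-- Letters over the Kronecker quiver. -/
abbrev KLetter := Fin 2 ⊕ Fin 2

/-- Adjacency of letters in a Kronecker string (no compositions of arrows exist, so
only direct/inverse alternations with no backtracking are allowed). -/
def KAdj : KLetter → KLetter → Prop
  | Sum.inl a, Sum.inr b => a ≠ b
  | Sum.inr b, Sum.inl a => b ≠ a
  | _, _ => False

/-- Finite strings over the Kronecker algebra (the empty word is the trivial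
string `1`). -/
def KIsString (w : List KLetter) : Prop := w.Chain' KAdj

/-- The set `H` of finite strings which are empty or begin with the direct arrow `α`. -/
def KH : Set (List KLetter) :=
  {w | KIsString w ∧ (w = [] ∨ w.head? = some (Sum.inl 0))}

/-- The standard strict ordering of strings (in one direction class): `c < d` if
`d = c α d'`, or `c = d β⁻¹ c'`, or `c = e γ⁻¹ c'` and `d = e δ d'`. -/
def KltH (c d : List KLetter) : Prop :=
  (∃ (a : Fin 2) (d' : List KLetter), d = c ++ Sum.inl a :: d') ∨
  (∃ (b : Fin 2) (c' : List KLetter), c = d ++ Sum.inr b :: c') ∨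
  (∃ (e : List KLetter) (b a : Fin 2) (c' d' : List KLetter),
    c = e ++ Sum.inr b :: c' ∧ d = e ++ Sum.inl a :: d')

/-- The extension of the string ordering comparing a finite string `c` with a 1-sided
infinite string `u`:  `c < u`. -/
def KltFI (c : List KLetter) (u : ℕ → KLetter) : Prop :=
  ((∀ i (h : i < c.length), c.get ⟨i, h⟩ = u i) ∧ ∃ a : Fin 2, u c.length = Sum.inl a) ∨
  (∃ j, ∃ h : j < c.length,
    (∀ i (hi : i < j), c.get ⟨i, lt_trans hi h⟩ = u i) ∧
    (∃ b : Fin 2, c.get ⟨j, h⟩ = Sum.inr b) ∧ (∃ a : Fin 2, u j = Sum.inl a))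

/-- The extension of the string ordering comparing a 1-sided infinite string `u` with a
finite string `c`:  `u < c`. -/
def KltIF (u : ℕ → KLetter) (c : List KLetter) : Prop :=
  ((∀ i (h : i < c.length), c.get ⟨i, h⟩ = u i) ∧ ∃ b : Fin 2, u c.length = Sum.inr b) ∨
  (∃ j, ∃ h : j < c.length,
    (∀ i (hi : i < j), c.get ⟨i, lt_trans hi h⟩ = u i) ∧
    (∃ a : Fin 2, c.get ⟨j, h⟩ = Sum.inl a) ∧ (∃ b : Fin 2, u j = Sum.inr b))

/-- The finite string `(αβ⁻¹)ⁿ`. -/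
def kpow (n : ℕ) : List KLetter :=
  (List.replicate n ([Sum.inl 0, Sum.inr 1] : List KLetter)).flatten

/-- The finite string `(αβ⁻¹)ⁿα`. -/
def kpowa (n : ℕ) : List KLetter := kpow n ++ [Sum.inl 0]

/-- The 1-sided infinite string `(αβ⁻¹)^∞`. -/
def kInf : ℕ → KLetter := fun n => if n % 2 = 0 then Sum.inl 0 else Sum.inr 1

/-- The chain `H`, as a type. -/
def KHo : Type := ↥KH

/-- The underlying string of an element of the chain `H`. -/
def KHo.str (x : KHo) : List KLetter := Subtype.val x

/-- The preorder on `KH` given by the reflexive-transitive closure of the string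
ordering (for the genuine string order this is just its reflexive closure). -/
instance : Preorder KHo where
  le := Relation.ReflTransGen (fun x y : KHo => KltH x.str y.str)
  lt := fun x y =>
    Relation.ReflTransGen (fun x y : KHo => KltH x.str y.str) x y ∧
      ¬ Relation.ReflTransGen (fun x y : KHo => KltH x.str y.str) y x
  le_refl := fun a => Relation.ReflTransGen.refl
  le_trans := fun a b c h h' => Relation.ReflTransGen.trans h h'
  lt_iff_le_not_ge := fun a b => Iff.rfl

/-- The interval `[c, d]` in the chain `KH`. -/
def KInterval (c d : KHo) : Type := {x : KHo // c ≤ x ∧ x ≤ d}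

instance (c d : KHo) : Preorder (KInterval c d) where
  le := fun a b => a.1 ≤ b.1
  lt := fun a b => a.1 ≤ b.1 ∧ ¬ b.1 ≤ a.1
  le_refl := fun a => le_refl (α := KHo) a.1
  le_trans := fun _ _ _ h h' => le_trans (α := KHo) h h'
  lt_iff_le_not_ge := fun a b => Iff.rfl


open Relation

section Lemmas
variable {P Q : Type*} [Preorder P] [Preorder Q]

lemma mdimCong_zero : mdimCong P 0 = fun x y => x = y := by
  unfold mdimCong; rw [Ordinal.limitRecOn_zero]

lemma mdimCong_succ (o : Ordinal) : mdimCong P (Order.succ o) =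
    Relation.EqvGen (fun x y => mdimCong P o x y ∨
      (x ≤ y ∧ FinLenBetween (mdimCong P o) x y) ∨
      (y ≤ x ∧ FinLenBetween (mdimCong P o) y x)) := by
  unfold mdimCong; rw [Ordinal.limitRecOn_succ]

lemma mdimCong_limit (o : Ordinal) (ho : Order.IsSuccLimit o) : mdimCong P o =
    fun x y => ∃ (o' : Ordinal) (_ : o' < o), mdimCong P o' x y := by
  unfold mdimCong; rw [Ordinal.limitRecOn_limit _ _ _ _ ho]

lemma flb_congr {r r' : P → P → Prop} (h : ∀ a b, r a b ↔ r' a b) {x y : P} :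
    FinLenBetween r x y ↔ FinLenBetween r' x y := by
  constructor <;> rintro ⟨n, hn⟩ <;>
    exact ⟨n, fun m f h1 h2 h3 => hn m f h1 h2 (fun i => by
      have := h3 i; simp only [h] at this ⊢; exact this)⟩

lemma finLenBetween_map (e : P ≃o Q) {r : P → P → Prop} {s : Q → Q → Prop}
    (h : ∀ a b, r a b ↔ s (e a) (e b)) {x y : P} (hf : FinLenBetween r x y) :
    FinLenBetween s (e x) (e y) := by
  obtain ⟨n, hn⟩ := hf
  refine ⟨n, fun m f hmono hb hnr => ?_⟩
  refine hn m (fun i => e.symm (f i)) (fun i j hij => e.symm.strictMono (hmono hij))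
    (fun i => ⟨?_, ?_⟩) (fun i => ?_)
  · have := (hb i).1; rw [← e.symm_apply_apply x]; exact e.symm.monotone this
  · have := (hb i).2; rw [← e.symm_apply_apply y]; exact e.symm.monotone this
  · intro hr
    exact hnr i (by rw [h] at hr; simpa using hr)

lemma eqvGen_map_equiv (e : P ≃ Q) {r : P → P → Prop} {s : Q → Q → Prop}
    (h : ∀ a b, r a b → s (e a) (e b)) {x y : P} (hxy : EqvGen r x y) :
    EqvGen s (e x) (e y) := by
  induction hxy with
  | rel a b hab => exact .rel _ _ (h a b hab)
  | refl a => exact .refl _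
  | symm a b _ ih => exact .symm _ _ ih
  | trans a b c _ _ ih1 ih2 => exact .trans _ _ _ ih1 ih2

lemma mdimCong_map (e : P ≃o Q) (o : Ordinal) (x y : P) :
    mdimCong P o x y ↔ mdimCong Q o (e x) (e y) := by
  induction o using Ordinal.limitRecOn generalizing x y with
  | zero => rw [mdimCong_zero, mdimCong_zero]; exact (EquivLike.apply_eq_iff_eq e).symm
  | add_one o ih =>
    rw [Ordinal.add_one_eq_succ, mdimCong_succ, mdimCong_succ]
    constructor
    · refine eqvGen_map_equiv e.toEquiv (fun a b hab => ?_)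
      rcases hab with hab | ⟨hle, hf⟩ | ⟨hle, hf⟩
      · exact Or.inl ((ih a b).1 hab)
      · exact Or.inr (Or.inl ⟨e.monotone hle, finLenBetween_map e ih hf⟩)
      · exact Or.inr (Or.inr ⟨e.monotone hle, finLenBetween_map e ih hf⟩)
    · intro hxy
      have ih' : ∀ a b : Q, mdimCong Q o a b ↔ mdimCong P o (e.symm a) (e.symm b) := by
        intro a b
        rw [ih]; simp
      have := eqvGen_map_equiv (s := fun x y => mdimCong P o x y ∨
          (x ≤ y ∧ FinLenBetween (mdimCong P o) x y) ∨
          (y ≤ x ∧ FinLenBetween (mdimCong P o) y x)) e.symm.toEquiv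
        (fun a b hab => ?_) hxy
      · simpa using this
      · rcases hab with hab | ⟨hle, hf⟩ | ⟨hle, hf⟩
        · exact Or.inl ((ih' a b).1 hab)
        · exact Or.inr (Or.inl ⟨e.symm.monotone hle, finLenBetween_map e.symm ih' hf⟩)
        · exact Or.inr (Or.inr ⟨e.symm.monotone hle, finLenBetween_map e.symm ih' hf⟩)
  | limit o ho ih =>
    rw [mdimCong_limit o ho, mdimCong_limit o ho]
    constructor
    · rintro ⟨o', ho', h⟩; exact ⟨o', ho', (ih o' ho' x y).1 h⟩
    · rintro ⟨o', ho', h⟩; exact ⟨o', ho', (ih o' ho' x y).2 h⟩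

lemma mdimIs_map (e : P ≃o Q) (d : Ordinal) (h : MDimIs Q d) : MDimIs P d := by
  obtain ⟨h1, h2⟩ := h
  refine ⟨fun x y => (mdimCong_map e _ x y).2 (h1 _ _), ?_⟩
  rcases h2 with h2 | h2
  · exact Or.inl h2
  · refine Or.inr (fun hall => h2 (fun a b => ?_))
    have := (mdimCong_map e d (e.symm a) (e.symm b)).1 (hall _ _)
    simpa using this
end Lemmas

section LPart
abbrev LL := ℕ ⊕ₗ ℕᵒᵈ

lemma LL_cases (z : LL) : (∃ n : ℕ, z = toLex (Sum.inl n)) ∨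
    (∃ n : ℕ, z = toLex (Sum.inr (OrderDual.toDual n))) := by
  rcases h : ofLex z with n | n
  · exact Or.inl ⟨n, by rw [← h]; rfl⟩
  · exact Or.inr ⟨OrderDual.ofDual n, by
      rw [show OrderDual.toDual (OrderDual.ofDual n) = n from rfl, ← h]; rfl⟩

lemma inr_le_inr_nat {a b : ℕ} :
    (toLex (Sum.inr (OrderDual.toDual a)) : LL) ≤ toLex (Sum.inr (OrderDual.toDual b)) ↔
      b ≤ a := by
  rw [Sum.Lex.inr_le_inr_iff]; exact OrderDual.toDual_le_toDual

lemma inr_lt_inr_nat {a b : ℕ} :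
    (toLex (Sum.inr (OrderDual.toDual a)) : LL) < toLex (Sum.inr (OrderDual.toDual b)) ↔
      b < a := by
  rw [Sum.Lex.inr_lt_inr_iff]; exact OrderDual.toDual_lt_toDual

lemma fin_chain_bound {m : ℕ} (g : Fin (m + 1) → ℕ) (hg : StrictMono g) :
    g 0 + m ≤ g (Fin.last m) := by
  have key : ∀ i : Fin (m + 1), g 0 + (i : ℕ) ≤ g i := by
    intro i
    induction i using Fin.induction with
    | zero => simp
    | succ i ih =>
      have h1 := hg (Fin.castSucc_lt_succ (i := i))
      have h2 : (i.succ : ℕ) = (i.castSucc : ℕ) + 1 := rfl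
      omega
  have := key (Fin.last m)
  simpa using this

lemma le_inl_cases {b : ℕ} {z : LL} (h : z ≤ toLex (Sum.inl b)) :
    ∃ c : ℕ, z = toLex (Sum.inl c) ∧ c ≤ b := by
  rcases LL_cases z with ⟨c, rfl⟩ | ⟨c, rfl⟩
  · exact ⟨c, rfl, Sum.Lex.inl_le_inl_iff.1 h⟩
  · exact absurd h Sum.Lex.not_inr_le_inl

lemma inr_le_cases {a : ℕ} {z : LL} (h : toLex (Sum.inr (OrderDual.toDual a)) ≤ z) :
    ∃ c : ℕ, z = toLex (Sum.inr (OrderDual.toDual c)) ∧ c ≤ a := by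
  rcases LL_cases z with ⟨c, rfl⟩ | ⟨c, rfl⟩
  · exact absurd h Sum.Lex.not_inr_le_inl
  · exact ⟨c, rfl, inr_le_inr_nat.1 h⟩

lemma flb_inl (r : LL → LL → Prop) (a b : ℕ) :
    FinLenBetween r (toLex (Sum.inl a)) (toLex (Sum.inl b)) := by
  refine ⟨b - a, fun m f hmono hb _ => ?_⟩
  have h1 : ∀ i, ∃ c : ℕ, f i = toLex (Sum.inl c) ∧ a ≤ c ∧ c ≤ b := by
    intro i
    obtain ⟨c, hc, hcb⟩ := le_inl_cases (hb i).2
    refine ⟨c, hc, ?_, hcb⟩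
    have := (hb i).1; rw [hc] at this; exact Sum.Lex.inl_le_inl_iff.1 this
  choose c hc ha hb2 using h1
  have hcm : StrictMono c := by
    intro i j hij
    have := hmono hij
    rw [hc i, hc j] at this
    exact Sum.Lex.inl_lt_inl_iff.1 this
  have := fin_chain_bound c hcm
  have h0 := ha 0
  have hl := hb2 (Fin.last m)
  omega

lemma flb_inr (r : LL → LL → Prop) (a b : ℕ) :
    FinLenBetween r (toLex (Sum.inr (OrderDual.toDual a)))
      (toLex (Sum.inr (OrderDual.toDual b))) := by
  refine ⟨a - b, fun m f hmono hb _ => ?_⟩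
  have h1 : ∀ i, ∃ c : ℕ, f i = toLex (Sum.inr (OrderDual.toDual c)) ∧ c ≤ a ∧ b ≤ c := by
    intro i
    obtain ⟨c, hc, hca⟩ := inr_le_cases (hb i).1
    refine ⟨c, hc, hca, ?_⟩
    have := (hb i).2; rw [hc] at this
    exact inr_le_inr_nat.1 this
  choose c hc ha hb2 using h1
  have hanti : ∀ i j, i < j → c j < c i := by
    intro i j hij
    have := hmono hij
    rw [hc i, hc j] at this
    exact inr_lt_inr_nat.1 this
  set g : Fin (m + 1) → ℕ := fun i => a - c i with hg
  have hgm : StrictMono g := by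
    intro i j hij
    have h1 := hanti i j hij
    have := ha i
    simp only [hg]
    omega
  have := fin_chain_bound g hgm
  have h0 := ha 0
  have hl := hb2 (Fin.last m)
  simp only [hg] at this
  omega

lemma no_flb_cross (a b : ℕ) :
    ¬ FinLenBetween (fun x y : LL => x = y) (toLex (Sum.inl a))
      (toLex (Sum.inr (OrderDual.toDual b))) := by
  rintro ⟨n, hn⟩
  have := hn (n + 1) (fun i => toLex (Sum.inl (a + i))) ?_ ?_ ?_
  · omega
  · intro i j hij
    exact Sum.Lex.inl_lt_inl_iff.2 (by omega)
  · intro i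
    exact ⟨Sum.Lex.inl_le_inl_iff.2 (by omega), Sum.Lex.inl_le_inr _ _⟩
  · intro i h
    have h' : Sum.inl (a + (i.castSucc : ℕ)) = (Sum.inl (a + (i.succ : ℕ)) : ℕ ⊕ ℕᵒᵈ) :=
      congrArg ofLex h
    have := Sum.inl_injective h'
    have h2 : (i.succ : ℕ) = (i.castSucc : ℕ) + 1 := rfl
    omega

lemma one_eq_succ_zero : (1 : Ordinal) = Order.succ 0 := by simp
lemma two_eq_succ_one : (2 : Ordinal) = Order.succ 1 := by simp; norm_num

lemma cong1_inl (a b : ℕ) :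
    mdimCong LL 1 (toLex (Sum.inl a)) (toLex (Sum.inl b)) := by
  rw [one_eq_succ_zero, mdimCong_succ]
  apply Relation.EqvGen.rel
  rcases le_total a b with h | h
  · exact Or.inr (Or.inl ⟨Sum.Lex.inl_le_inl_iff.2 h, flb_inl _ a b⟩)
  · exact Or.inr (Or.inr ⟨Sum.Lex.inl_le_inl_iff.2 h, flb_inl _ b a⟩)

lemma cong1_inr (a b : ℕ) :
    mdimCong LL 1 (toLex (Sum.inr (OrderDual.toDual a))) (toLex (Sum.inr (OrderDual.toDual b))) := by
  rw [one_eq_succ_zero, mdimCong_succ]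
  apply Relation.EqvGen.rel
  rcases le_total a b with h | h
  · exact Or.inr (Or.inr ⟨inr_le_inr_nat.2 h, flb_inr _ b a⟩)
  · exact Or.inr (Or.inl ⟨inr_le_inr_nat.2 h, flb_inr _ a b⟩)

lemma not_cong1_cross :
    ¬ mdimCong LL 1 (toLex (Sum.inl 0)) (toLex (Sum.inr (OrderDual.toDual 0))) := by
  rw [one_eq_succ_zero, mdimCong_succ]
  intro h
  have key : ∀ x y : LL, Relation.EqvGen (fun x y => mdimCong LL 0 x y ∨
      (x ≤ y ∧ FinLenBetween (mdimCong LL 0) x y) ∨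
      (y ≤ x ∧ FinLenBetween (mdimCong LL 0) y x)) x y →
      (ofLex x).isLeft = (ofLex y).isLeft := by
    intro x y hxy
    induction hxy with
    | rel a b hab =>
      rcases hab with hab | ⟨hle, hf⟩ | ⟨hle, hf⟩
      · rw [mdimCong_zero] at hab; rw [hab]
      · rcases LL_cases a with ⟨p, rfl⟩ | ⟨p, rfl⟩ <;> rcases LL_cases b with ⟨q, rfl⟩ | ⟨q, rfl⟩
        · rfl
        · exfalso
          rw [mdimCong_zero] at hf
          exact no_flb_cross p q hf
        · exact absurd hle Sum.Lex.not_inr_le_inl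
        · rfl
      · rcases LL_cases a with ⟨p, rfl⟩ | ⟨p, rfl⟩ <;> rcases LL_cases b with ⟨q, rfl⟩ | ⟨q, rfl⟩
        · rfl
        · exact absurd hle Sum.Lex.not_inr_le_inl
        · exfalso
          rw [mdimCong_zero] at hf
          exact no_flb_cross q p hf
        · rfl
    | refl a => rfl
    | symm a b _ ih => exact ih.symm
    | trans a b c _ _ ih1 ih2 => exact ih1.trans ih2
  simpa using key _ _ h

lemma cross_of_not_cong1 {u v : LL} (huv : u ≤ v) (h : ¬ mdimCong LL 1 u v) :
    (∃ a : ℕ, u = toLex (Sum.inl a)) ∧ ∃ b : ℕ, v = toLex (Sum.inr (OrderDual.toDual b)) := by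
  rcases LL_cases u with ⟨p, rfl⟩ | ⟨p, rfl⟩ <;> rcases LL_cases v with ⟨q, rfl⟩ | ⟨q, rfl⟩
  · exact absurd (cong1_inl p q) h
  · exact ⟨⟨p, rfl⟩, ⟨q, rfl⟩⟩
  · exact absurd huv Sum.Lex.not_inr_le_inl
  · exact absurd (cong1_inr p q) h

lemma cong2 (x y : LL) : mdimCong LL 2 x y := by
  rw [two_eq_succ_one, mdimCong_succ]
  have key : ∀ x y : LL, x ≤ y → FinLenBetween (mdimCong LL 1) x y := by
    intro x y _
    refine ⟨1, fun m f hmono hb hnr => ?_⟩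
    by_contra hm
    push_neg at hm
    have h2m : 2 ≤ m := hm
    have h01 : (⟨0, by omega⟩ : Fin m).castSucc = (⟨0, by omega⟩ : Fin (m+1)) := rfl
    have hp0 := hnr ⟨0, by omega⟩
    have hp1 := hnr ⟨1, by omega⟩
    have e0 : (⟨0, by omega⟩ : Fin m).castSucc = (⟨0, by omega⟩ : Fin (m+1)) := rfl
    have e1 : (⟨0, by omega⟩ : Fin m).succ = (⟨1, by omega⟩ : Fin (m+1)) := rfl
    have e2 : (⟨1, by omega⟩ : Fin m).castSucc = (⟨1, by omega⟩ : Fin (m+1)) := rfl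
    have e3 : (⟨1, by omega⟩ : Fin m).succ = (⟨2, by omega⟩ : Fin (m+1)) := rfl
    rw [e0, e1] at hp0
    rw [e2, e3] at hp1
    have l01 : f ⟨0, by omega⟩ ≤ f ⟨1, by omega⟩ :=
      le_of_lt (hmono (by exact Fin.mk_lt_mk.2 (by omega)))
    have l12 : f ⟨1, by omega⟩ ≤ f ⟨2, by omega⟩ :=
      le_of_lt (hmono (by exact Fin.mk_lt_mk.2 (by omega)))
    obtain ⟨_, b1, hb1⟩ := cross_of_not_cong1 l01 hp0
    obtain ⟨⟨a1, ha1⟩, _⟩ := cross_of_not_cong1 l12 hp1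
    rw [hb1] at ha1
    exact absurd (toLex.injective ha1) (by simp)
  rcases le_total x y with h | h
  · exact Relation.EqvGen.rel _ _ (Or.inr (Or.inl ⟨h, key x y h⟩))
  · exact Relation.EqvGen.symm _ _ (Relation.EqvGen.rel _ _ (Or.inr (Or.inl ⟨h, key y x h⟩)))

lemma mdimIs_LL : MDimIs LL 1 := by
  constructor
  · intro x y
    have : (1 : Ordinal) + 1 = 2 := one_add_one_eq_two
    rw [this]
    exact cong2 x y
  · exact Or.inr (fun h => not_cong1_cross (h _ _))
end LPart

def kpre (p : ℕ) : List KLetter := (List.range p).map kInf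

lemma kpre_length (p : ℕ) : (kpre p).length = p := by simp [kpre]

lemma kpre_get (p i : ℕ) (h : i < (kpre p).length) : (kpre p).get ⟨i, h⟩ = kInf i := by
  simp [kpre]

lemma kpre_getElem? {p i : ℕ} (h : i < p) : (kpre p)[i]? = some (kInf i) := by
  simp [kpre, List.getElem?_map, List.getElem?_range h]

lemma kInf_even {k : ℕ} (h : k % 2 = 0) : kInf k = Sum.inl 0 := by simp [kInf, h]
lemma kInf_odd {k : ℕ} (h : k % 2 = 1) : kInf k = Sum.inr 1 := by simp [kInf, h]

lemma kpre_succ (p : ℕ) : kpre (p + 1) = kpre p ++ [kInf p] := by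
  simp [kpre, List.range_succ]

lemma kpow_succ (n : ℕ) : kpow (n + 1) = kpow n ++ [Sum.inl 0, Sum.inr 1] := by
  unfold kpow
  rw [List.replicate_succ', List.flatten_append]
  simp

lemma kpow_eq (n : ℕ) : kpow n = kpre (2 * n) := by
  induction n with
  | zero => rfl
  | succ n ih =>
    have h2 : 2 * (n + 1) = (2 * n + 1) + 1 := by ring
    rw [kpow_succ, ih, h2, kpre_succ, kpre_succ,
      kInf_even (by omega), kInf_odd (by omega)]
    simp

lemma kpowa_eq (n : ℕ) : kpowa n = kpre (2 * n + 1) := by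
  rw [kpowa, kpow_eq, kpre_succ, kInf_even (by omega)]

lemma kpre_mem (p : ℕ) : kpre p ∈ KH := by
  constructor
  · rw [KIsString, List.Chain', List.isChain_iff_getElem]
    intro i h
    have e := kpre_get p; simp only [List.get_eq_getElem] at e
    rw [e _ (by omega), e _ (by omega)]
    rcases Nat.mod_two_eq_zero_or_one i with hp | hp
    · rw [kInf_even hp, kInf_odd (by omega)]
      simp [KAdj]
    · rw [kInf_odd hp, kInf_even (by omega)]
      simp [KAdj]
  · cases p with
    | zero => exact Or.inl rfl
    | succ q =>
      right
      rw [List.head?_eq_getElem?, kpre_getElem? (by omega), kInf_even (by omega)]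

lemma mem_KH_eq {w : List KLetter} (hw : w ∈ KH) : w = kpre w.length := by
  have key : ∀ i (h : i < w.length), w.get ⟨i, h⟩ = kInf i := by
    intro i
    induction i with
    | zero =>
      intro h
      obtain ⟨hs, hh⟩ := hw
      rcases hh with rfl | hh
      · simp at h
      · rw [kInf_even (by omega)]
        cases w with
        | nil => simp at h
        | cons a t => simpa using hh
    | succ i ih =>
      intro h
      have hi : i < w.length := by omega
      have hii := ih hi
      have hadj : KAdj (w.get ⟨i, hi⟩) (w.get ⟨i + 1, h⟩) := by
        have := List.isChain_iff_getElem.1 hw.1 i (by omega)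
        exact this
      rw [hii] at hadj
      rcases Nat.mod_two_eq_zero_or_one i with hp | hp
      · rw [kInf_even hp] at hadj
        rcases hx : w.get ⟨i + 1, h⟩ with a | b
        · rw [hx] at hadj; exact absurd hadj (by simp [KAdj])
        · rw [hx] at hadj
          have hb : b = 1 := by
            have h1 : b ≠ 0 := Ne.symm hadj
            omega
          rw [hb, kInf_odd (by omega)]
      · rw [kInf_odd hp] at hadj
        rcases hx : w.get ⟨i + 1, h⟩ with a | b
        · rw [hx] at hadj
          have ha : a = 0 := by
            have h1 : a ≠ 1 := Ne.symm hadj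
            omega
          rw [ha, kInf_even (by omega)]
        · rw [hx] at hadj; exact absurd hadj (by simp [KAdj])
  refine List.ext_get (by rw [kpre_length]) (fun n h1 h2 => ?_)
  rw [kpre_get, key n h1]

lemma kpre_split : ∀ q p : ℕ, p < q → ∃ t, kpre q = kpre p ++ kInf p :: t := by
  intro q
  induction q with
  | zero => omega
  | succ q ih =>
    intro p hp
    rcases Nat.lt_or_ge p q with h | h
    · obtain ⟨t, ht⟩ := ih p h
      exact ⟨t ++ [kInf q], by rw [kpre_succ, ht]; simp⟩
    · have hpq : p = q := by omega
      subst hpq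
      exact ⟨[], by rw [kpre_succ]⟩

lemma kltH_kpre_iff (p q : ℕ) :
    KltH (kpre p) (kpre q) ↔ (p < q ∧ p % 2 = 0) ∨ (q < p ∧ q % 2 = 1) := by
  constructor
  · rintro (⟨a, d', hd⟩ | ⟨b, c', hc⟩ | ⟨e, b, a, c', d', hc, hd⟩)
    · have hq : q = p + (d'.length + 1) := by
        have := congrArg List.length hd
        simp [kpre_length] at this
        omega
      have h1 : (kpre q)[p]? = some (kInf p) := kpre_getElem? (by omega)
      rw [hd] at h1
      rw [List.getElem?_append_right (by rw [kpre_length])] at h1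
      rw [kpre_length] at h1
      simp at h1
      left
      refine ⟨by omega, ?_⟩
      by_contra hodd
      rw [kInf_odd (by omega)] at h1
      exact nomatch h1
    · have hp2 : p = q + (c'.length + 1) := by
        have := congrArg List.length hc
        simp [kpre_length] at this
        omega
      have h1 : (kpre p)[q]? = some (kInf q) := kpre_getElem? (by omega)
      rw [hc] at h1
      rw [List.getElem?_append_right (by rw [kpre_length])] at h1
      rw [kpre_length] at h1
      simp at h1
      right
      refine ⟨by omega, ?_⟩
      by_contra heven
      rw [kInf_even (by omega)] at h1
      exact nomatch h1
    · exfalso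
      have hp2 : p = e.length + (c'.length + 1) := by
        have := congrArg List.length hc
        simp [kpre_length] at this
        omega
      have hq2 : q = e.length + (d'.length + 1) := by
        have := congrArg List.length hd
        simp [kpre_length] at this
        omega
      have h1 : (kpre p)[e.length]? = some (kInf e.length) := kpre_getElem? (by omega)
      have h2 : (kpre q)[e.length]? = some (kInf e.length) := kpre_getElem? (by omega)
      rw [hc, List.getElem?_append_right (le_refl _)] at h1
      rw [hd, List.getElem?_append_right (le_refl _)] at h2
      simp at h1 h2
      rw [← h1] at h2
      exact nomatch h2
  · rintro (⟨hlt, hp⟩ | ⟨hlt, hq⟩)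
    · obtain ⟨t, ht⟩ := kpre_split q p hlt
      rw [kInf_even hp] at ht
      exact Or.inl ⟨0, t, ht⟩
    · obtain ⟨t, ht⟩ := kpre_split p q hlt
      rw [kInf_odd hq] at ht
      exact Or.inr (Or.inl ⟨1, t, ht⟩)

lemma kltFI_kpre {p : ℕ} (hp : p % 2 = 0) : KltFI (kpre p) kInf := by
  left
  refine ⟨fun i h => kpre_get p i h, 0, ?_⟩
  rw [kpre_length, kInf_even hp]

lemma not_kltFI_kpre {p : ℕ} (hp : p % 2 = 1) : ¬ KltFI (kpre p) kInf := by
  rintro (⟨_, a, ha⟩ | ⟨j, hj, _, ⟨b, hb⟩, ⟨a, ha⟩⟩)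
  · rw [kpre_length, kInf_odd hp] at ha
    exact nomatch ha
  · rw [kpre_get] at hb
    rw [hb] at ha
    exact nomatch ha

lemma kltIF_kpre {p : ℕ} (hp : p % 2 = 1) : KltIF kInf (kpre p) := by
  left
  refine ⟨fun i h => kpre_get p i h, 1, ?_⟩
  rw [kpre_length, kInf_odd hp]

lemma not_kltIF_kpre {p : ℕ} (hp : p % 2 = 0) : ¬ KltIF kInf (kpre p) := by
  rintro (⟨_, b, hb⟩ | ⟨j, hj, _, ⟨a, ha⟩, ⟨b, hb⟩⟩)
  · rw [kpre_length, kInf_even hp] at hb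
    exact nomatch hb
  · rw [kpre_get] at ha
    rw [ha] at hb
    exact nomatch hb


/-! The order isomorphism between `ℕ ⊕ₗ ℕᵒᵈ` and `KHo`. -/

def toKHo : (ℕ ⊕ₗ ℕᵒᵈ) → KHo := fun z =>
  Sum.elim (fun n => (⟨kpow n, by rw [kpow_eq]; exact kpre_mem _⟩ : KHo))
    (fun n => (⟨kpowa (OrderDual.ofDual n), by rw [kpowa_eq]; exact kpre_mem _⟩ : KHo))
    (ofLex z)

lemma toKHo_inl (n : ℕ) : (toKHo (toLex (Sum.inl n))).str = kpow n := rfl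
lemma toKHo_inr (n : ℕ) : (toKHo (toLex (Sum.inr (OrderDual.toDual n)))).str = kpowa n := rfl

def ofKHo (x : KHo) : ℕ ⊕ₗ ℕᵒᵈ :=
  if x.str.length % 2 = 0 then toLex (Sum.inl (x.str.length / 2))
  else toLex (Sum.inr (OrderDual.toDual (x.str.length / 2)))

lemma kpow_length (n : ℕ) : (kpow n).length = 2 * n := by rw [kpow_eq, kpre_length]
lemma kpowa_length (n : ℕ) : (kpowa n).length = 2 * n + 1 := by rw [kpowa_eq, kpre_length]

lemma KHo.str_mem (x : KHo) : x.str ∈ KH := Subtype.prop x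
lemma KHo.ext' {x y : KHo} (h : x.str = y.str) : x = y := Subtype.ext h

lemma ofKHo_toKHo (z : ℕ ⊕ₗ ℕᵒᵈ) : ofKHo (toKHo z) = z := by
  rcases LL_cases z with ⟨n, rfl⟩ | ⟨n, rfl⟩
  · have h : (toKHo (toLex (Sum.inl n))).str.length = 2 * n := by rw [toKHo_inl, kpow_length]
    rw [ofKHo, h, if_pos (by omega)]
    have h2 : 2 * n / 2 = n := by omega
    rw [h2]
  · have h : (toKHo (toLex (Sum.inr (OrderDual.toDual n)))).str.length = 2 * n + 1 := by
      rw [toKHo_inr, kpowa_length]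
    rw [ofKHo, h, if_neg (by omega)]
    have h2 : (2 * n + 1) / 2 = n := by omega
    rw [h2]

lemma toKHo_ofKHo (x : KHo) : toKHo (ofKHo x) = x := by
  have hm := mem_KH_eq x.str_mem
  obtain ⟨L, hL⟩ : ∃ L, x.str.length = L := ⟨_, rfl⟩
  rw [hL] at hm
  rcases Nat.mod_two_eq_zero_or_one L with hp | hp
  · rw [ofKHo, hL, if_pos hp]
    apply KHo.ext'
    rw [toKHo_inl, kpow_eq, hm]
    congr 1
    omega
  · rw [ofKHo, hL, if_neg (by omega)]
    apply KHo.ext'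
    rw [toKHo_inr, kpowa_eq, hm]
    congr 1
    omega

lemma lt_iff_kltH (z w : ℕ ⊕ₗ ℕᵒᵈ) : z < w ↔ KltH (toKHo z).str (toKHo w).str := by
  rcases LL_cases z with ⟨m, rfl⟩ | ⟨m, rfl⟩ <;> rcases LL_cases w with ⟨n, rfl⟩ | ⟨n, rfl⟩
  · rw [toKHo_inl, toKHo_inl, kpow_eq, kpow_eq, kltH_kpre_iff, Sum.Lex.inl_lt_inl_iff]
    omega
  · rw [toKHo_inl, toKHo_inr, kpow_eq, kpowa_eq, kltH_kpre_iff]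
    constructor
    · intro _; omega
    · intro _; exact Sum.Lex.inl_lt_inr _ _
  · rw [toKHo_inr, toKHo_inl, kpowa_eq, kpow_eq, kltH_kpre_iff]
    constructor
    · intro h; exact absurd h Sum.Lex.not_inr_lt_inl
    · intro h; omega
  · rw [toKHo_inr, toKHo_inr, kpowa_eq, kpowa_eq, kltH_kpre_iff, inr_lt_inr_nat]
    omega

lemma le_toKHo (z w : ℕ ⊕ₗ ℕᵒᵈ) : toKHo z ≤ toKHo w ↔ z ≤ w := by
  constructor
  · intro h
    have key : ∀ {a b : KHo}, Relation.ReflTransGen (fun a b : KHo => KltH a.str b.str) a b →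
        ofKHo a ≤ ofKHo b := by
      intro a b hab
      induction hab with
      | refl => exact le_refl _
      | tail hst hlt ih =>
        refine le_trans ih (le_of_lt ?_)
        rw [lt_iff_kltH, toKHo_ofKHo, toKHo_ofKHo]
        exact hlt
    have := key h
    rwa [ofKHo_toKHo, ofKHo_toKHo] at this
  · intro h
    rcases h.lt_or_eq with hlt | heq
    · exact Relation.ReflTransGen.single ((lt_iff_kltH z w).1 hlt)
    · rw [heq]

def kEquiv : (ℕ ⊕ₗ ℕᵒᵈ) ≃ KHo := ⟨toKHo, ofKHo, ofKHo_toKHo, toKHo_ofKHo⟩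

def kIso : (ℕ ⊕ₗ ℕᵒᵈ) ≃o KHo :=
  { toEquiv := kEquiv, map_rel_iff' := @fun a b => le_toKHo a b }

/-! Interval isomorphisms. -/

lemma interval_mem_inl (m n k : ℕ) :
    toKHo (toLex (Sum.inl m)) ≤ toKHo (toLex (Sum.inl (m + k))) ∧
      toKHo (toLex (Sum.inl (m + k))) ≤ toKHo (toLex (Sum.inr (OrderDual.toDual n))) :=
  ⟨(le_toKHo _ _).2 (Sum.Lex.inl_le_inl_iff.2 (by omega)),
    (le_toKHo _ _).2 (Sum.Lex.inl_le_inr _ _)⟩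

lemma interval_mem_inr (m n j : ℕ) :
    toKHo (toLex (Sum.inl m)) ≤ toKHo (toLex (Sum.inr (OrderDual.toDual (n + j)))) ∧
      toKHo (toLex (Sum.inr (OrderDual.toDual (n + j)))) ≤
        toKHo (toLex (Sum.inr (OrderDual.toDual n))) :=
  ⟨(le_toKHo _ _).2 (Sum.Lex.inl_le_inr _ _),
    (le_toKHo _ _).2 (inr_le_inr_nat.2 (by omega))⟩

def intoIv (m n : ℕ) (z : ℕ ⊕ₗ ℕᵒᵈ) :
    KInterval (toKHo (toLex (Sum.inl m))) (toKHo (toLex (Sum.inr (OrderDual.toDual n)))) :=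
  Sum.elim (fun k => ⟨toKHo (toLex (Sum.inl (m + k))), interval_mem_inl m n k⟩)
    (fun j => ⟨toKHo (toLex (Sum.inr (OrderDual.toDual (n + OrderDual.ofDual j)))),
      interval_mem_inr m n (OrderDual.ofDual j)⟩) (ofLex z)

def outIv (m n : ℕ)
    (x : KInterval (toKHo (toLex (Sum.inl m))) (toKHo (toLex (Sum.inr (OrderDual.toDual n))))) :
    ℕ ⊕ₗ ℕᵒᵈ :=
  Sum.elim (fun k => toLex (Sum.inl (k - m)))
    (fun j => toLex (Sum.inr (OrderDual.toDual (OrderDual.ofDual j - n)))) (ofLex (ofKHo x.1))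

lemma outIv_intoIv (m n : ℕ) (z : ℕ ⊕ₗ ℕᵒᵈ) : outIv m n (intoIv m n z) = z := by
  rcases LL_cases z with ⟨k, rfl⟩ | ⟨j, rfl⟩
  · show outIv m n ⟨toKHo (toLex (Sum.inl (m + k))), interval_mem_inl m n k⟩ = _
    unfold outIv
    simp only [ofKHo_toKHo, ofLex_toLex, Sum.elim_inl]
    have h2 : m + k - m = k := by omega
    rw [h2]
  · show outIv m n ⟨toKHo (toLex (Sum.inr (OrderDual.toDual (n + j)))),
      interval_mem_inr m n j⟩ = _
    unfold outIv
    simp only [ofKHo_toKHo, ofLex_toLex, Sum.elim_inr]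
    have h2 : n + j - n = j := by omega
    rw [show OrderDual.ofDual (OrderDual.toDual (n + j)) = n + j from rfl, h2]

lemma intoIv_outIv (m n : ℕ)
    (x : KInterval (toKHo (toLex (Sum.inl m))) (toKHo (toLex (Sum.inr (OrderDual.toDual n))))) :
    intoIv m n (outIv m n x) = x := by
  obtain ⟨x1, hx1, hx2⟩ := x
  rcases LL_cases (ofKHo x1) with ⟨k, hk⟩ | ⟨j, hj⟩
  · have hxval : x1 = toKHo (toLex (Sum.inl k)) := by rw [← hk, toKHo_ofKHo]
    have hmk : m ≤ k := by
      rw [hxval] at hx1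
      exact Sum.Lex.inl_le_inl_iff.1 ((le_toKHo _ _).1 hx1)
    apply Subtype.ext
    show (intoIv m n (outIv m n ⟨x1, hx1, hx2⟩)).1 = x1
    unfold outIv
    simp only [hk, ofLex_toLex, Sum.elim_inl]
    rw [intoIv]
    simp only [ofLex_toLex, Sum.elim_inl]
    rw [hxval]
    have h2 : m + (k - m) = k := by omega
    show toKHo (toLex (Sum.inl (m + (k - m)))) = _
    rw [h2]
  · have hxval : x1 = toKHo (toLex (Sum.inr (OrderDual.toDual j))) := by
      rw [← hj, toKHo_ofKHo]
    have hnj : n ≤ j := by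
      rw [hxval] at hx2
      exact inr_le_inr_nat.1 ((le_toKHo _ _).1 hx2)
    apply Subtype.ext
    show (intoIv m n (outIv m n ⟨x1, hx1, hx2⟩)).1 = x1
    unfold outIv
    simp only [hj, ofLex_toLex, Sum.elim_inr]
    rw [intoIv]
    simp only [ofLex_toLex, Sum.elim_inr, OrderDual.ofDual_toDual]
    rw [hxval]
    have h2 : n + (j - n) = j := by omega
    show toKHo (toLex (Sum.inr (OrderDual.toDual (n + (j - n))))) = _
    rw [h2]

lemma intoIv_le_intoIv (m n : ℕ) (z w : ℕ ⊕ₗ ℕᵒᵈ) :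
    intoIv m n z ≤ intoIv m n w ↔ z ≤ w := by
  rcases LL_cases z with ⟨k, rfl⟩ | ⟨j, rfl⟩ <;> rcases LL_cases w with ⟨k', rfl⟩ | ⟨j', rfl⟩
  · show toKHo (toLex (Sum.inl (m + k))) ≤ toKHo (toLex (Sum.inl (m + k'))) ↔ _
    rw [le_toKHo, Sum.Lex.inl_le_inl_iff, Sum.Lex.inl_le_inl_iff]
    omega
  · show toKHo (toLex (Sum.inl (m + k))) ≤
      toKHo (toLex (Sum.inr (OrderDual.toDual (n + j')))) ↔ _
    rw [le_toKHo]
    constructor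
    · intro _; exact Sum.Lex.inl_le_inr _ _
    · intro _; exact Sum.Lex.inl_le_inr _ _
  · show toKHo (toLex (Sum.inr (OrderDual.toDual (n + j)))) ≤
      toKHo (toLex (Sum.inl (m + k'))) ↔ _
    rw [le_toKHo]
    constructor
    · intro h; exact absurd h Sum.Lex.not_inr_le_inl
    · intro h; exact absurd h Sum.Lex.not_inr_le_inl
  · show toKHo (toLex (Sum.inr (OrderDual.toDual (n + j)))) ≤
      toKHo (toLex (Sum.inr (OrderDual.toDual (n + j')))) ↔ _
    rw [le_toKHo, inr_le_inr_nat, inr_le_inr_nat]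
    omega

def kIntervalIso (m n : ℕ) : (ℕ ⊕ₗ ℕᵒᵈ) ≃o
    KInterval (toKHo (toLex (Sum.inl m))) (toKHo (toLex (Sum.inr (OrderDual.toDual n)))) :=
  { toFun := intoIv m n, invFun := outIv m n, left_inv := outIv_intoIv m n,
    right_inv := intoIv_outIv m n, map_rel_iff' := @fun a b => intoIv_le_intoIv m n a b }

lemma mdim_KHo : MDimIs KHo 1 := mdimIs_map kIso.symm 1 mdimIs_LL

lemma mdim_interval (m n : ℕ) :
    MDimIs (KInterval (toKHo (toLex (Sum.inl m)))
      (toKHo (toLex (Sum.inr (OrderDual.toDual n))))) 1 :=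
  mdimIs_map (kIntervalIso m n).symm 1 mdimIs_LL

lemma not_cong1_interval (m n : ℕ) :
    ¬ ∀ x y : KInterval (toKHo (toLex (Sum.inl m)))
        (toKHo (toLex (Sum.inr (OrderDual.toDual n)))), mdimCong _ 1 x y := by
  intro h
  exact not_cong1_cross ((mdimCong_map (kIntervalIso m n) 1 _ _).2 (h _ _))

lemma str_eq_of_kltFI {c : KHo} (h : KltFI c.str kInf) :
    ∃ m, c = toKHo (toLex (Sum.inl m)) := by
  have hm := mem_KH_eq c.str_mem
  obtain ⟨L, hL⟩ : ∃ L, c.str.length = L := ⟨_, rfl⟩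
  rw [hL] at hm
  rcases Nat.mod_two_eq_zero_or_one L with hp | hp
  · refine ⟨L / 2, KHo.ext' ?_⟩
    rw [toKHo_inl, kpow_eq, hm]
    congr 1
    omega
  · exfalso
    rw [hm] at h
    exact not_kltFI_kpre hp h

lemma str_eq_of_kltIF {d : KHo} (h : KltIF kInf d.str) :
    ∃ n, d = toKHo (toLex (Sum.inr (OrderDual.toDual n))) := by
  have hm := mem_KH_eq d.str_mem
  obtain ⟨L, hL⟩ : ∃ L, d.str.length = L := ⟨_, rfl⟩
  rw [hL] at hm
  rcases Nat.mod_two_eq_zero_or_one L with hp | hp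
  · exfalso
    rw [hm] at h
    exact not_kltIF_kpre hp h
  · refine ⟨L / 2, KHo.ext' ?_⟩
    rw [toKHo_inr, kpowa_eq, hm]
    congr 1
    omega

/-- Over the Kronecker algebra, the chain `H` of finite strings beginning with `α`
(together with the empty string) consists exactly of the strings `(αβ⁻¹)ⁿ` and
`(αβ⁻¹)ⁿα`; it has order type `ω + ω*`, with the `(αβ⁻¹)ⁿ` forming the ascending
`ω`-part and the `(αβ⁻¹)ᵐα` the descending `ω*`-part above it; the infinite string
`(αβ⁻¹)^∞` sits between the two parts; `H` has m-dimension `1`; and the string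
`(αβ⁻¹)^∞` has m-dimension `1` (the minimum of the m-dimensions of the intervals
`[c, d]` of `H` with `c < (αβ⁻¹)^∞ < d`). -/
theorem kronecker_H_omega_plus_omegaStar :
    (KH = {w | ∃ n, w = kpow n} ∪ {w | ∃ n, w = kpowa n}) ∧
    (∀ m n : ℕ, m < n → KltH (kpow m) (kpow n)) ∧
    (∀ m n : ℕ, m < n → KltH (kpowa n) (kpowa m)) ∧
    (∀ m n : ℕ, KltH (kpow m) (kpowa n)) ∧
    (∃ e : (ℕ ⊕ₗ ℕᵒᵈ) ≃ KHo,
      (∀ x y : ℕ ⊕ₗ ℕᵒᵈ, x < y ↔ KltH (e x).str (e y).str) ∧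
      (∀ n : ℕ, (e (toLex (Sum.inl n))).str = kpow n) ∧
      (∀ n : ℕ, (e (toLex (Sum.inr (OrderDual.toDual n)))).str = kpowa n)) ∧
    (∀ n : ℕ, KltFI (kpow n) kInf) ∧
    (∀ n : ℕ, KltIF kInf (kpowa n)) ∧
    MDimIs KHo 1 ∧
    ((∃ c d : KHo, KltFI c.str kInf ∧ KltIF kInf d.str ∧ MDimIs (KInterval c d) 1) ∧
      (∀ (c d : KHo) (e : Ordinal), KltFI c.str kInf → KltIF kInf d.str →
        MDimIs (KInterval c d) e → 1 ≤ e)) := by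
  refine ⟨?_, ?_, ?_, ?_, ?_, ?_, ?_, ?_, ?_, ?_⟩
  · -- KH = {kpow n} ∪ {kpowa n}
    ext w
    simp only [Set.mem_union, Set.mem_setOf_eq]
    constructor
    · intro hw
      have hm := mem_KH_eq hw
      obtain ⟨L, hL⟩ : ∃ L, w.length = L := ⟨_, rfl⟩
      rw [hL] at hm
      rcases Nat.mod_two_eq_zero_or_one L with hp | hp
      · refine Or.inl ⟨L / 2, ?_⟩
        rw [kpow_eq, hm]
        congr 1
        omega
      · refine Or.inr ⟨L / 2, ?_⟩
        rw [kpowa_eq, hm]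
        congr 1
        omega
    · rintro (⟨n, rfl⟩ | ⟨n, rfl⟩)
      · rw [kpow_eq]; exact kpre_mem _
      · rw [kpowa_eq]; exact kpre_mem _
  · intro m n hmn
    rw [kpow_eq, kpow_eq, kltH_kpre_iff]
    omega
  · intro m n hmn
    rw [kpowa_eq, kpowa_eq, kltH_kpre_iff]
    omega
  · intro m n
    rw [kpow_eq, kpowa_eq, kltH_kpre_iff]
    omega
  · refine ⟨kIso.toEquiv, fun x y => ?_, fun n => toKHo_inl n, fun n => toKHo_inr n⟩
    exact lt_iff_kltH x y
  · intro n
    rw [kpow_eq]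
    exact kltFI_kpre (by omega)
  · intro n
    rw [kpowa_eq]
    exact kltIF_kpre (by omega)
  · exact mdim_KHo
  · exact ⟨toKHo (toLex (Sum.inl 0)), toKHo (toLex (Sum.inr (OrderDual.toDual 0))),
      by rw [toKHo_inl, kpow_eq]; exact kltFI_kpre (by omega),
      by rw [toKHo_inr, kpowa_eq]; exact kltIF_kpre (by omega),
      mdim_interval 0 0⟩
  · intro c d e h1 h2 h3
    obtain ⟨m, rfl⟩ := str_eq_of_kltFI h1
    obtain ⟨n, rfl⟩ := str_eq_of_kltIF h2
    by_contra he
    push_neg at he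
    have he0 : e = 0 := by rwa [Ordinal.lt_one_iff_zero] at he
    subst he0
    have hall := h3.1
    rw [zero_add] at hall
    exact not_cong1_interval m n hall
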